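/- Let S be a finite set of points in ℝ² in general position, and let v₁, v₂, v₃, v₄, v₅, v₆ ∈ S be six points in convex position listed in the cyclic order in which they appear on the boundary of their convex hull (forming a convex hexagon). If no point of S lies in the interior of the triangle with vertices v₁, v₃, v₅, then S contains a 6-hole. -/

import Mathlib

/-- Orientation determinant of three points in the plane:
`det [[1,1,1],[pₓ,qₓ,rₓ],[p_y,q_y,r_y]]`.
The triple `(p,q,r)` is positively oriented iff `det3 p q r > 0`,
and negatively oriented iff `det3 p q r < 0`. -/
noncomputable def det3 (p q r : ℝ × ℝ) : ℝ :=
  Matrix.det !![(1:ℝ), 1, 1; p.1, q.1, r.1; p.2, q.2, r.2]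

/-- A set of points in the plane is in general position if no three
distinct points of it are collinear. -/
def InGenPos (S : Set (ℝ × ℝ)) : Prop :=
  ∀ p ∈ S, ∀ q ∈ S, ∀ r ∈ S, p ≠ q → p ≠ r → q ≠ r →
    ¬ Collinear ℝ ({p, q, r} : Set (ℝ × ℝ))

/-- `P` is a `k`-gon of `S`: a `k`-element subset of `S` in convex position,
i.e. every point of `P` is an extreme point of the convex hull of `P`. -/
def IsGon (k : ℕ) (S P : Set (ℝ × ℝ)) : Prop :=
  P ⊆ S ∧ P.Finite ∧ P.ncard = k ∧
    ∀ p ∈ P, p ∈ Set.extremePoints ℝ (convexHull ℝ P)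

/-- `P` is a `k`-hole of `S`: a `k`-gon of `S` whose convex hull contains
no point of `S` other than the `k` points of `P`. -/
def IsHole (k : ℕ) (S P : Set (ℝ × ℝ)) : Prop :=
  IsGon k S P ∧ ∀ q ∈ S, q ∈ convexHull ℝ P → q ∈ P

/- ### Auxiliary lemmas -/

lemma det3_eq (p q r : ℝ × ℝ) :
    det3 p q r = (q.1-p.1)*(r.2-p.2) - (q.2-p.2)*(r.1-p.1) := by
  simp [det3, Matrix.det_fin_three]; ring

lemma det3_cyc (a b c : ℝ × ℝ) : det3 a b c = det3 b c a := by simp only [det3_eq]; ring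

lemma det3_swap23 (a b c : ℝ × ℝ) : det3 a b c = -det3 a c b := by
  simp only [det3_eq]; ring

lemma det3_aba (a b : ℝ × ℝ) : det3 a b a = 0 := by simp only [det3_eq]; ring
lemma det3_abb (a b : ℝ × ℝ) : det3 a b b = 0 := by simp only [det3_eq]; ring
lemma det3_aab (a b : ℝ × ℝ) : det3 a a b = 0 := by simp only [det3_eq]; ring

lemma dpos_cyc {a b c : ℝ × ℝ} (h : 0 < det3 a b c) : 0 < det3 b c a := by rwa [← det3_cyc]
lemma dpos_cyc2 {a b c : ℝ × ℝ} (h : 0 < det3 a b c) : 0 < det3 c a b := dpos_cyc (dpos_cyc h)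
lemma dneg_cyc {a b c : ℝ × ℝ} (h : det3 a b c < 0) : det3 b c a < 0 := by rwa [← det3_cyc]
lemma dneg_cyc2 {a b c : ℝ × ℝ} (h : det3 a b c < 0) : det3 c a b < 0 := dneg_cyc (dneg_cyc h)

lemma dpos_of_neg_swap12 {a b c : ℝ × ℝ} (h : det3 a b c < 0) : 0 < det3 b a c := by
  have e : det3 a b c = -det3 b a c := by simp only [det3_eq]; ring
  linarith [e ▸ h]

lemma dpos_of_neg_swap23 {a b c : ℝ × ℝ} (h : det3 a b c < 0) : 0 < det3 a c b := by
  rw [det3_swap23] at h; linarith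

lemma dpos_of_neg_swap13 {a b c : ℝ × ℝ} (h : det3 a b c < 0) : 0 < det3 c b a := by
  have e : det3 a b c = -det3 c b a := by simp only [det3_eq]; ring
  linarith [e ▸ h]

lemma ne12_of_pos {a b c : ℝ × ℝ} (h : 0 < det3 a b c) : a ≠ b := by
  intro he; rw [he, det3_aab] at h; exact lt_irrefl 0 h

lemma ne13_of_pos {a b c : ℝ × ℝ} (h : 0 < det3 a b c) : a ≠ c := by
  intro he; rw [he, det3_aba] at h; exact lt_irrefl 0 h

lemma ne23_of_pos {a b c : ℝ × ℝ} (h : 0 < det3 a b c) : b ≠ c := by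
  intro he; rw [he, det3_abb] at h; exact lt_irrefl 0 h

lemma det3_combo {s t : ℝ} (hst : s + t = 1) (p q x y : ℝ × ℝ) :
    det3 p q (s • x + t • y) = s * det3 p q x + t * det3 p q y := by
  simp only [det3_eq, Prod.smul_fst, Prod.smul_snd, Prod.fst_add, Prod.snd_add, smul_eq_mul]
  have h : t = 1 - s := by linarith
  subst h; ring

lemma det3_expansion (t0 t1 t2 a b x : ℝ × ℝ) :
    det3 t0 t1 t2 * det3 a b x =
      det3 t1 t2 x * det3 a b t0 + det3 t2 t0 x * det3 a b t1 + det3 t0 t1 x * det3 a b t2 := by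
  simp only [det3_eq]; ring

lemma expand_pos (t0 t1 t2 a b x : ℝ × ℝ) (hΔ : 0 < det3 t0 t1 t2)
    (h0 : 0 ≤ det3 t1 t2 x) (h1 : 0 < det3 t2 t0 x) (h2 : 0 ≤ det3 t0 t1 x)
    (g0 : 0 ≤ det3 a b t0) (g1 : 0 < det3 a b t1) (g2 : 0 ≤ det3 a b t2) :
    0 < det3 a b x := by
  nlinarith [det3_expansion t0 t1 t2 a b x, mul_pos h1 g1, mul_nonneg h0 g0, mul_nonneg h2 g2]

lemma diag_pos (q0 q1 q2 q3 q4 : ℝ × ℝ)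
    (d012 : 0 < det3 q0 q1 q2) (d013 : 0 < det3 q0 q1 q3) (d014 : 0 < det3 q0 q1 q4)
    (d023 : 0 < det3 q0 q2 q3) (d034 : 0 < det3 q0 q3 q4) :
    0 < det3 q0 q2 q4 := by
  have hpl : det3 q0 q2 q4 * det3 q0 q3 q1 - det3 q0 q2 q3 * det3 q0 q4 q1
      + det3 q0 q2 q1 * det3 q0 q4 q3 = 0 := by simp only [det3_eq]; ring
  have e1 : det3 q0 q3 q1 = -det3 q0 q1 q3 := by simp only [det3_eq]; ring
  have e2 : det3 q0 q4 q1 = -det3 q0 q1 q4 := by simp only [det3_eq]; ring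
  have e3 : det3 q0 q2 q1 = -det3 q0 q1 q2 := by simp only [det3_eq]; ring
  have e4 : det3 q0 q4 q3 = -det3 q0 q3 q4 := by simp only [det3_eq]; ring
  rw [e1, e2, e3, e4] at hpl
  nlinarith [mul_pos d023 d014, mul_pos d012 d034]

lemma det3_sum (t : Finset (ℝ × ℝ)) (w : (ℝ × ℝ) → ℝ) (hw : ∑ y ∈ t, w y = 1) (a b : ℝ × ℝ) :
    det3 a b (∑ y ∈ t, w y • y) = ∑ y ∈ t, w y * det3 a b y := by
  have hfst : (∑ y ∈ t, w y • y).1 = ∑ y ∈ t, w y * y.1 := by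
    rw [Prod.fst_sum]; exact Finset.sum_congr rfl fun y _ => rfl
  have hsnd : (∑ y ∈ t, w y • y).2 = ∑ y ∈ t, w y * y.2 := by
    rw [Prod.snd_sum]; exact Finset.sum_congr rfl fun y _ => rfl
  have hrhs : ∀ y ∈ t, w y * det3 a b y
      = (b.1-a.1)*(w y * y.2) - ((b.1-a.1)*a.2)*(w y) - ((b.2-a.2)*(w y * y.1) - ((b.2-a.2)*a.1)*(w y)) := by
    intro y _; rw [det3_eq]; ring
  rw [Finset.sum_congr rfl hrhs]
  simp only [Finset.sum_sub_distrib, ← Finset.mul_sum]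
  rw [det3_eq, hfst, hsnd, hw]; ring

lemma convex_halfplane (a b : ℝ × ℝ) (m : ℝ) : Convex ℝ {x : ℝ × ℝ | m ≤ det3 a b x} := by
  intro x hx y hy s t hs ht hst
  simp only [Set.mem_setOf_eq] at *
  rw [det3_combo hst]
  have ht' : t = 1 - s := by linarith
  subst ht'
  nlinarith [mul_le_mul_of_nonneg_left hx hs, mul_le_mul_of_nonneg_left hy ht]

lemma hull_halfplane {P : Set (ℝ × ℝ)} (a b : ℝ × ℝ) (m : ℝ)
    (h : ∀ y ∈ P, m ≤ det3 a b y) {x : ℝ × ℝ} (hx : x ∈ convexHull ℝ P) :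
    m ≤ det3 a b x :=
  convexHull_min h (convex_halfplane a b m) hx

open scoped Classical in
lemma face_lemma (t : Finset (ℝ × ℝ)) (a b : ℝ × ℝ) (m : ℝ)
    (hm : ∀ y ∈ t, m ≤ det3 a b y) {x : ℝ × ℝ}
    (hx : x ∈ convexHull ℝ (t : Set (ℝ × ℝ))) (hfx : det3 a b x ≤ m) :
    x ∈ convexHull ℝ ((t.filter fun y => det3 a b y = m : Finset (ℝ × ℝ)) : Set (ℝ × ℝ)) := by
  rw [Finset.convexHull_eq] at hx
  obtain ⟨w, hw0, hw1, hwc⟩ := hx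
  rw [Finset.centerMass_eq_of_sum_1 _ _ hw1] at hwc
  simp only [id] at hwc
  have hfx' : det3 a b x = ∑ y ∈ t, w y * det3 a b y := by rw [← hwc, det3_sum t w hw1]
  have hsum0 : ∑ y ∈ t, w y * (det3 a b y - m) ≤ 0 := by
    have : ∑ y ∈ t, w y * (det3 a b y - m) = det3 a b x - m := by
      simp only [mul_sub, Finset.sum_sub_distrib, ← Finset.sum_mul, hw1, one_mul, ← hfx']
    linarith
  have hterm : ∀ y ∈ t, 0 ≤ w y * (det3 a b y - m) := fun y hy =>
    mul_nonneg (hw0 y hy) (by linarith [hm y hy])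
  have hall : ∀ y ∈ t, w y * (det3 a b y - m) = 0 := by
    intro y hy
    have := (Finset.sum_eq_zero_iff_of_nonneg hterm).1 (le_antisymm hsum0 (Finset.sum_nonneg hterm))
    exact this y hy
  have hvanish : ∀ y ∈ t, y ∉ t.filter (fun y => det3 a b y = m) → w y = 0 := by
    intro y hy hyn
    by_contra hw
    have : det3 a b y - m = 0 := by
      rcases mul_eq_zero.1 (hall y hy) with h | h
      · exact absurd h hw
      · exact h
    exact hyn (Finset.mem_filter.2 ⟨hy, by linarith⟩)
  rw [Finset.convexHull_eq]
  refine ⟨w, fun y hy => hw0 y (Finset.mem_filter.1 hy).1, ?_, ?_⟩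
  · rw [← hw1]
    exact Finset.sum_subset (Finset.filter_subset _ t) (fun y hy hyn => hvanish y hy hyn)
  · rw [Finset.centerMass_eq_of_sum_1]
    · simp only [id]
      rw [← hwc]
      exact Finset.sum_subset (Finset.filter_subset _ t)
        (fun y hy hyn => by rw [hvanish y hy hyn, zero_smul])
    · rw [← hw1]
      exact Finset.sum_subset (Finset.filter_subset _ t) (fun y hy hyn => hvanish y hy hyn)

open scoped Classical in
lemma extreme_helper (t : Finset (ℝ × ℝ)) (x aL aR : ℝ × ℝ) (hxt : x ∈ t)
    (hL : ∀ y ∈ t, 0 ≤ det3 aL x y) (hR : ∀ y ∈ t, 0 ≤ det3 x aR y)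
    (huniq : ∀ y ∈ t, det3 aL x y = 0 → det3 x aR y = 0 → y = x) :
    x ∈ Set.extremePoints ℝ (convexHull ℝ (t : Set (ℝ × ℝ))) := by
  refine ⟨subset_convexHull ℝ _ (by exact_mod_cast hxt), ?_⟩
  intro y hy z hz hseg
  obtain ⟨s, u, hs, hu, hsu, hx⟩ := hseg
  have key : ∀ p ∈ convexHull ℝ (t : Set (ℝ × ℝ)),
      det3 aL x p = 0 → det3 x aR p = 0 → p = x := by
    intro p hp hLp hRp
    have h1 := face_lemma t aL x 0 hL hp (le_of_eq hLp)
    have h2 := face_lemma (t.filter fun q => det3 aL x q = 0) x aR 0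
      (fun q hq => hR q (Finset.mem_filter.1 hq).1) h1 (le_of_eq hRp)
    have h3 : ((((t.filter fun q => det3 aL x q = 0).filter fun q => det3 x aR q = 0) :
        Finset (ℝ × ℝ)) : Set (ℝ × ℝ)) ⊆ {x} := by
      intro q hq
      simp only [Finset.coe_filter, Set.mem_setOf_eq, Finset.mem_filter] at hq
      exact huniq q hq.1.1 hq.1.2 hq.2
    have := convexHull_mono h3 h2
    rwa [convexHull_singleton, Set.mem_singleton_iff] at this
  have hLy := hull_halfplane aL x 0 hL hy
  have hLz := hull_halfplane aL x 0 hL hz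
  have hRy := hull_halfplane x aR 0 hR hy
  have hRz := hull_halfplane x aR 0 hR hz
  have hLx : det3 aL x (s • y + u • z) = s * det3 aL x y + u * det3 aL x z := det3_combo hsu ..
  have hRx : det3 x aR (s • y + u • z) = s * det3 x aR y + u * det3 x aR z := det3_combo hsu ..
  rw [hx, det3_abb] at hLx
  rw [hx, det3_aba] at hRx
  have hLy0 : det3 aL x y = 0 := by nlinarith
  have hLz0 : det3 aL x z = 0 := by nlinarith
  have hRy0 : det3 x aR y = 0 := by nlinarith
  have hRz0 : det3 x aR z = 0 := by nlinarith
  exact key y hy hLy0 hRy0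

lemma collinear_of_det3 {a b c : ℝ × ℝ} (h : det3 a b c = 0) :
    Collinear ℝ ({a, b, c} : Set (ℝ × ℝ)) := by
  by_cases hab : a = b
  · subst hab
    have he : ({a, a, c} : Set (ℝ × ℝ)) = {a, c} := by simp
    rw [he]; exact collinear_pair ℝ a c
  · rw [collinear_iff_of_mem (Set.mem_insert a {b, c})]
    refine ⟨b - a, ?_⟩
    intro p hp
    have hd : (b.1 - a.1) * (c.2 - a.2) - (b.2 - a.2) * (c.1 - a.1) = 0 := by
      rw [det3_eq] at h; linarith
    have hr : ∀ r : ℝ, r • (b - a) +ᵥ a = (r * (b.1 - a.1) + a.1, r * (b.2 - a.2) + a.2) := by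
      intro r
      simp [Prod.ext_iff, vadd_eq_add]
    simp only [Set.mem_insert_iff, Set.mem_singleton_iff] at hp
    rcases hp with rfl | rfl | rfl
    · exact ⟨0, by rw [hr]; simp [Prod.ext_iff]⟩
    · exact ⟨1, by rw [hr]; simp [Prod.ext_iff]⟩
    · by_cases h1 : b.1 - a.1 ≠ 0
      · refine ⟨(p.1 - a.1) / (b.1 - a.1), ?_⟩
        rw [hr, Prod.ext_iff]
        constructor
        · field_simp; ring
        · show p.2 = (p.1 - a.1) / (b.1 - a.1) * (b.2 - a.2) + a.2
          field_simp
          nlinarith [hd]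
      · push_neg at h1
        have h2 : b.2 - a.2 ≠ 0 := by
          intro h2
          apply hab
          have ha1 : a.1 = b.1 := by linarith
          have ha2 : a.2 = b.2 := by linarith
          apply Prod.ext <;> assumption
        refine ⟨(p.2 - a.2) / (b.2 - a.2), ?_⟩
        rw [hr, Prod.ext_iff]
        constructor
        · show p.1 = (p.2 - a.2) / (b.2 - a.2) * (b.1 - a.1) + a.1
          field_simp
          nlinarith [hd]
        · field_simp; ring

lemma det3_continuous (a b : ℝ × ℝ) : Continuous fun x : ℝ × ℝ => det3 a b x := by
  have e : (fun x : ℝ × ℝ => det3 a b x)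
      = fun x : ℝ × ℝ => (b.1-a.1)*(x.2-a.2) - (b.2-a.2)*(x.1-a.1) := funext fun x => det3_eq a b x
  rw [e]; fun_prop

lemma mem_convexHull_triple {A B C x : ℝ × ℝ} {a b c : ℝ} (ha : 0 ≤ a) (hb : 0 ≤ b) (hc : 0 ≤ c)
    (habc : a + b + c = 1) (hx : x = a • A + b • B + c • C) :
    x ∈ convexHull ℝ ({A, B, C} : Set (ℝ × ℝ)) := by
  have hconv := convex_convexHull ℝ ({A, B, C} : Set (ℝ × ℝ))
  have key := hconv.sum_mem (t := (Finset.univ : Finset (Fin 3))) (w := ![a, b, c])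
    (z := ![A, B, C]) (fun i _ => by fin_cases i <;> simpa)
    (by rw [Fin.sum_univ_three]; simpa using habc)
    (fun i _ => by fin_cases i <;> exact subset_convexHull _ _ (by simp))
  rw [Fin.sum_univ_three] at key
  simpa [hx] using key

lemma det3_bary_sum (a b c x : ℝ × ℝ) :
    det3 b c x + det3 c a x + det3 a b x = det3 a b c := by simp only [det3_eq]; ring

lemma det3_bary_fst (a b c x : ℝ × ℝ) :
    det3 b c x * a.1 + det3 c a x * b.1 + det3 a b x * c.1 = det3 a b c * x.1 := by
  simp only [det3_eq]; ring

lemma det3_bary_snd (a b c x : ℝ × ℝ) :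
    det3 b c x * a.2 + det3 c a x * b.2 + det3 a b x * c.2 = det3 a b c * x.2 := by
  simp only [det3_eq]; ring

lemma mem_interior_triangle (a b c x : ℝ × ℝ) (hΔ : 0 < det3 a b c)
    (h1 : 0 < det3 a b x) (h2 : 0 < det3 b c x) (h3 : 0 < det3 c a x) :
    x ∈ interior (convexHull ℝ ({a, b, c} : Set (ℝ × ℝ))) := by
  rw [mem_interior]
  refine ⟨{y | 0 < det3 a b y ∧ 0 < det3 b c y ∧ 0 < det3 c a y}, ?_, ?_, ⟨h1, h2, h3⟩⟩
  · rintro y ⟨k1, k2, k3⟩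
    have hΔ' : det3 a b c ≠ 0 := ne_of_gt hΔ
    refine mem_convexHull_triple (a := det3 b c y / det3 a b c) (b := det3 c a y / det3 a b c)
      (c := det3 a b y / det3 a b c) (div_nonneg k2.le hΔ.le) (div_nonneg k3.le hΔ.le)
      (div_nonneg k1.le hΔ.le) ?_ ?_
    · field_simp
      linarith [det3_bary_sum a b c y]
    · have e1 := det3_bary_fst a b c y
      have e2 := det3_bary_snd a b c y
      apply Prod.ext
      · simp only [Prod.fst_add, Prod.smul_fst, smul_eq_mul]
        field_simp
        linarith [e1]
      · simp only [Prod.snd_add, Prod.smul_snd, smul_eq_mul]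
        field_simp
        linarith [e2]
  · exact ((isOpen_lt continuous_const (det3_continuous a b)).inter
      ((isOpen_lt continuous_const (det3_continuous b c)).inter
        (isOpen_lt continuous_const (det3_continuous c a))))

lemma corner_choice (S : Set (ℝ × ℝ)) (hfin : S.Finite) (q0 q1 q2 q3 q4 q5 : ℝ × ℝ)
    (hq1 : q1 ∈ S)
    (d012 : 0 < det3 q0 q1 q2) (d123 : 0 < det3 q1 q2 q3) (d134 : 0 < det3 q1 q3 q4)
    (d145 : 0 < det3 q1 q4 q5) (d015 : 0 < det3 q0 q1 q5) :
    ∃ u ∈ S, det3 q0 q2 u < 0 ∧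
      (0 ≤ det3 q0 q1 u ∧ 0 ≤ det3 q1 q2 u ∧ 0 ≤ det3 q2 q3 u ∧ 0 ≤ det3 q3 q4 u ∧
        0 ≤ det3 q4 q5 u ∧ 0 ≤ det3 q5 q0 u) ∧
      (u = q1 ∨ 0 < det3 q0 q1 u) ∧
      (∀ q ∈ S, (0 < det3 q0 q1 q ∧ 0 < det3 q1 q2 q ∧ 0 < det3 q2 q3 q ∧ 0 < det3 q3 q4 q ∧
          0 < det3 q4 q5 q ∧ 0 < det3 q5 q0 q) → det3 q0 q2 q < 0 →
        det3 q0 q2 q ≤ det3 q0 q2 u) := by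
  classical
  set C : Set (ℝ × ℝ) := {q ∈ S | (0 < det3 q0 q1 q ∧ 0 < det3 q1 q2 q ∧ 0 < det3 q2 q3 q ∧
    0 < det3 q3 q4 q ∧ 0 < det3 q4 q5 q ∧ 0 < det3 q5 q0 q) ∧ det3 q0 q2 q < 0} with hC
  by_cases hne : C.Nonempty
  · obtain ⟨u, huC, hmax⟩ := Set.exists_max_image C (fun q => det3 q0 q2 q)
      (hfin.subset (fun q hq => hq.1)) hne
    obtain ⟨huS, hins, hf⟩ := huC
    refine ⟨u, huS, hf, ⟨hins.1.le, hins.2.1.le, hins.2.2.1.le, hins.2.2.2.1.le,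
      hins.2.2.2.2.1.le, hins.2.2.2.2.2.le⟩, Or.inr hins.1, ?_⟩
    intro q hqS hq hfq
    exact hmax q ⟨hqS, hq, hfq⟩
  · refine ⟨q1, hq1, ?_, ?_, Or.inl rfl, ?_⟩
    · rw [det3_swap23]; linarith
    · exact ⟨le_of_eq (det3_abb q0 q1).symm, le_of_eq (det3_aba q1 q2).symm, (dpos_cyc d123).le,
        (dpos_cyc d134).le, (dpos_cyc d145).le, (dpos_cyc2 d015).le⟩
    · intro q hqS hq hfq
      exact absurd ⟨hqS, hq, hfq⟩ (fun hqC => hne ⟨q, hqC⟩)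

lemma corner_facts (q0 q1 q2 q3 q4 q5 u : ℝ × ℝ)
    (d012 : 0 < det3 q0 q1 q2) (d013 : 0 < det3 q0 q1 q3) (d014 : 0 < det3 q0 q1 q4)
    (d015 : 0 < det3 q0 q1 q5) (d023 : 0 < det3 q0 q2 q3) (d024 : 0 < det3 q0 q2 q4)
    (d025 : 0 < det3 q0 q2 q5) (d123 : 0 < det3 q1 q2 q3) (d124 : 0 < det3 q1 q2 q4)
    (d125 : 0 < det3 q1 q2 q5)
    (c01 : 0 ≤ det3 q0 q1 u) (c12 : 0 ≤ det3 q1 q2 u) (f : det3 q0 q2 u < 0) :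
    0 < det3 q2 q0 u ∧ 0 < det3 q3 q0 u ∧ 0 < det3 q4 q0 u ∧ 0 < det3 q5 q0 u ∧
    0 < det3 q2 q3 u ∧ 0 < det3 q2 q4 u ∧ 0 < det3 q2 q5 u := by
  have O1 : 0 < det3 q2 q0 u := dpos_of_neg_swap12 f
  refine ⟨O1, ?_, ?_, ?_, ?_, ?_, ?_⟩
  · exact expand_pos q0 q1 q2 q3 q0 u d012 c12 O1 c01
      (le_of_eq (det3_abb q3 q0).symm) (dpos_cyc2 d013) (dpos_cyc2 d023).le
  · exact expand_pos q0 q1 q2 q4 q0 u d012 c12 O1 c01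
      (le_of_eq (det3_abb q4 q0).symm) (dpos_cyc2 d014) (dpos_cyc2 d024).le
  · exact expand_pos q0 q1 q2 q5 q0 u d012 c12 O1 c01
      (le_of_eq (det3_abb q5 q0).symm) (dpos_cyc2 d015) (dpos_cyc2 d025).le
  · exact expand_pos q0 q1 q2 q2 q3 u d012 c12 O1 c01
      (dpos_cyc d023).le (dpos_cyc d123) (le_of_eq (det3_aba q2 q3).symm)
  · exact expand_pos q0 q1 q2 q2 q4 u d012 c12 O1 c01
      (dpos_cyc d024).le (dpos_cyc d124) (le_of_eq (det3_aba q2 q4).symm)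
  · exact expand_pos q0 q1 q2 q2 q5 u d012 c12 O1 c01
      (dpos_cyc d025).le (dpos_cyc d125) (le_of_eq (det3_aba q2 q5).symm)

set_option maxHeartbeats 1000000 in
open scoped Classical in
lemma main_ccw (S : Set (ℝ × ℝ)) (hfin : S.Finite) (hgp : InGenPos S)
    (p0 p1 p2 p3 p4 p5 : ℝ × ℝ)
    (hm0 : p0 ∈ S) (hm1 : p1 ∈ S) (hm2 : p2 ∈ S) (hm3 : p3 ∈ S) (hm4 : p4 ∈ S) (hm5 : p5 ∈ S)
    (d012 : 0 < det3 p0 p1 p2) (d013 : 0 < det3 p0 p1 p3) (d014 : 0 < det3 p0 p1 p4)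
    (d015 : 0 < det3 p0 p1 p5) (d023 : 0 < det3 p0 p2 p3) (d025 : 0 < det3 p0 p2 p5)
    (d034 : 0 < det3 p0 p3 p4) (d035 : 0 < det3 p0 p3 p5) (d045 : 0 < det3 p0 p4 p5)
    (d123 : 0 < det3 p1 p2 p3) (d124 : 0 < det3 p1 p2 p4) (d125 : 0 < det3 p1 p2 p5)
    (d134 : 0 < det3 p1 p3 p4) (d145 : 0 < det3 p1 p4 p5) (d234 : 0 < det3 p2 p3 p4)
    (d235 : 0 < det3 p2 p3 p5) (d245 : 0 < det3 p2 p4 p5) (d345 : 0 < det3 p3 p4 p5)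
    (hempty : ∀ q ∈ S, q ∉ interior (convexHull ℝ ({p0, p2, p4} : Set (ℝ × ℝ)))) :
    ∃ P : Set (ℝ × ℝ), IsHole 6 S P := by
  classical
  have d024 : 0 < det3 p0 p2 p4 := diag_pos p0 p1 p2 p3 p4 d012 d013 d014 d023 d034
  -- corner choices
  obtain ⟨u0, hu0S, f0, ⟨e0a, e0b, e0c, e0d, e0e, e0f⟩, alt0, max0⟩ :=
    corner_choice S hfin p0 p1 p2 p3 p4 p5 hm1 d012 d123 d134 d145 d015
  obtain ⟨u1, hu1S, f1, ⟨e1a, e1b, e1c, e1d, e1e, e1f⟩, alt1, max1⟩ :=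
    corner_choice S hfin p2 p3 p4 p5 p0 p1 hm3 d234 d345 (dpos_cyc d035) (dpos_cyc2 d013)
      (dpos_cyc d123)
  obtain ⟨u2, hu2S, f2, ⟨e2a, e2b, e2c, e2d, e2e, e2f⟩, alt2, max2⟩ :=
    corner_choice S hfin p4 p5 p0 p1 p2 p3 hm5 (dpos_cyc d045) (dpos_cyc2 d015)
      (dpos_cyc2 d125) (dpos_cyc2 d235) (dpos_cyc d345)
  -- corner facts
  obtain ⟨O10, O20, O30, O40, O50, O60, O70⟩ :=
    corner_facts p0 p1 p2 p3 p4 p5 u0 d012 d013 d014 d015 d023 d024 d025 d123 d124 d125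
      e0a e0b f0
  obtain ⟨O11, O21, O31, O41, O51, O61, O71⟩ :=
    corner_facts p2 p3 p4 p5 p0 p1 u1 d234 d235 (dpos_cyc d023) (dpos_cyc d123) d245
      (dpos_cyc d024) (dpos_cyc d124) d345 (dpos_cyc d034) (dpos_cyc d134) e1a e1b f1
  obtain ⟨O12, O22, O32, O42, O52, O62, O72⟩ :=
    corner_facts p4 p5 p0 p1 p2 p3 u2 (dpos_cyc d045) (dpos_cyc d145) (dpos_cyc d245)
      (dpos_cyc d345) (dpos_cyc2 d014) (dpos_cyc2 d024) (dpos_cyc2 d034) (dpos_cyc2 d015)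
      (dpos_cyc2 d025) (dpos_cyc2 d035) e2a e2b f2
  have d450 : 0 < det3 p4 p5 p0 := dpos_cyc d045
  -- cross facts
  have X01 : 0 < det3 p0 u0 u1 := expand_pos p2 p3 p4 p0 u0 u1 d234 e1b O11 e1a
    (dpos_cyc O10).le (dpos_cyc O20) (dpos_cyc O30).le
  have X02 : 0 < det3 p0 u0 u2 := expand_pos p4 p5 p0 p0 u0 u2 d450 e2b O12 e2a
    (dpos_cyc O30).le (dpos_cyc O40) (le_of_eq (det3_aba p0 u0).symm)
  have X11 : 0 < det3 u0 p2 u1 := expand_pos p2 p3 p4 u0 p2 u1 d234 e1b O11 e1a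
    (le_of_eq (det3_abb u0 p2).symm) (dpos_cyc2 O50) (dpos_cyc2 O60).le
  have X12 : 0 < det3 u0 p2 u2 := expand_pos p4 p5 p0 u0 p2 u2 d450 e2b O12 e2a
    (dpos_cyc2 O60).le (dpos_cyc2 O70) (dpos_cyc2 O10).le
  have X21 : 0 < det3 p2 u1 u2 := expand_pos p4 p5 p0 p2 u1 u2 d450 e2b O12 e2a
    (dpos_cyc O11).le (dpos_cyc O21) (dpos_cyc O31).le
  have X22 : 0 < det3 p2 u1 u0 := expand_pos p0 p1 p2 p2 u1 u0 d012 e0b O10 e0a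
    (dpos_cyc O31).le (dpos_cyc O41) (le_of_eq (det3_aba p2 u1).symm)
  have X31 : 0 < det3 u1 p4 u2 := expand_pos p4 p5 p0 u1 p4 u2 d450 e2b O12 e2a
    (le_of_eq (det3_abb u1 p4).symm) (dpos_cyc2 O51) (dpos_cyc2 O61).le
  have X32 : 0 < det3 u1 p4 u0 := expand_pos p0 p1 p2 u1 p4 u0 d012 e0b O10 e0a
    (dpos_cyc2 O61).le (dpos_cyc2 O71) (dpos_cyc2 O11).le
  have X41 : 0 < det3 p4 u2 u0 := expand_pos p0 p1 p2 p4 u2 u0 d012 e0b O10 e0a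
    (dpos_cyc O12).le (dpos_cyc O22) (dpos_cyc O32).le
  have X42 : 0 < det3 p4 u2 u1 := expand_pos p2 p3 p4 p4 u2 u1 d234 e1b O11 e1a
    (dpos_cyc O32).le (dpos_cyc O42) (le_of_eq (det3_aba p4 u2).symm)
  have X51 : 0 < det3 u2 p0 u0 := expand_pos p0 p1 p2 u2 p0 u0 d012 e0b O10 e0a
    (le_of_eq (det3_abb u2 p0).symm) (dpos_cyc2 O52) (dpos_cyc2 O62).le
  have X52 : 0 < det3 u2 p0 u1 := expand_pos p2 p3 p4 u2 p0 u1 d234 e1b O11 e1a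
    (dpos_cyc2 O62).le (dpos_cyc2 O72) (dpos_cyc2 O12).le
  -- distinctness
  have n01 : p0 ≠ u0 := ne23_of_pos O10
  have n02 : p0 ≠ p2 := ne13_of_pos d012
  have n03 : p0 ≠ u1 := ne13_of_pos O31
  have n04 : p0 ≠ p4 := ne13_of_pos d014
  have n05 : p0 ≠ u2 := ne13_of_pos O62
  have n12 : u0 ≠ p2 := (ne13_of_pos O10).symm
  have n13 : u0 ≠ u1 := ne23_of_pos X01
  have n14 : u0 ≠ p4 := (ne13_of_pos O30).symm
  have n15 : u0 ≠ u2 := ne23_of_pos X02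
  have n23 : p2 ≠ u1 := ne23_of_pos O11
  have n24 : p2 ≠ p4 := ne13_of_pos d234
  have n25 : p2 ≠ u2 := ne13_of_pos O32
  have n34 : u1 ≠ p4 := (ne13_of_pos O11).symm
  have n35 : u1 ≠ u2 := ne23_of_pos X21
  have n45 : p4 ≠ u2 := ne23_of_pos O12
  set T : Finset (ℝ × ℝ) := {p0, u0, p2, u1, p4, u2} with hT
  have hmemT : ∀ y ∈ T, p0 = y ∨ u0 = y ∨ p2 = y ∨ u1 = y ∨ p4 = y ∨ u2 = y := by
    intro y hy
    have h : y = p0 ∨ y = u0 ∨ y = p2 ∨ y = u1 ∨ y = p4 ∨ y = u2 := by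
      simpa only [hT, Finset.mem_insert, Finset.mem_singleton] using hy
    rcases h with h | h | h | h | h | h
    exacts [Or.inl h.symm, Or.inr (Or.inl h.symm), Or.inr (Or.inr (Or.inl h.symm)),
      Or.inr (Or.inr (Or.inr (Or.inl h.symm))),
      Or.inr (Or.inr (Or.inr (Or.inr (Or.inl h.symm)))),
      Or.inr (Or.inr (Or.inr (Or.inr (Or.inr h.symm))))]
  have hp0T : p0 ∈ T := by simp [hT]
  have hu0T : u0 ∈ T := by simp [hT]
  have hp2T : p2 ∈ T := by simp [hT]
  have hu1T : u1 ∈ T := by simp [hT]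
  have hp4T : p4 ∈ T := by simp [hT]
  have hu2T : u2 ∈ T := by simp [hT]
  have hcard : T.card = 6 := by
    rw [hT]
    rw [Finset.card_insert_of_notMem (by
      simp only [Finset.mem_insert, Finset.mem_singleton]; push_neg
      exact ⟨n01, n02, n03, n04, n05⟩)]
    rw [Finset.card_insert_of_notMem (by
      simp only [Finset.mem_insert, Finset.mem_singleton]; push_neg
      exact ⟨n12, n13, n14, n15⟩)]
    rw [Finset.card_insert_of_notMem (by
      simp only [Finset.mem_insert, Finset.mem_singleton]; push_neg
      exact ⟨n23, n24, n25⟩)]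
    rw [Finset.card_insert_of_notMem (by
      simp only [Finset.mem_insert, Finset.mem_singleton]; push_neg
      exact ⟨n34, n35⟩)]
    rw [Finset.card_insert_of_notMem (by
      simp only [Finset.mem_singleton]; exact n45)]
    simp
  -- halfplane tables for the six edges of the new hexagon
  have tab0 : ∀ y ∈ T, 0 ≤ det3 p0 u0 y := by
    intro y hy
    rcases hmemT y hy with rfl | rfl | rfl | rfl | rfl | rfl
    exacts [le_of_eq (det3_aba p0 u0).symm, le_of_eq (det3_abb p0 u0).symm,
      (dpos_cyc O10).le, X01.le, (dpos_cyc O30).le, X02.le]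
  have tab1 : ∀ y ∈ T, 0 ≤ det3 u0 p2 y := by
    intro y hy
    rcases hmemT y hy with rfl | rfl | rfl | rfl | rfl | rfl
    exacts [(dpos_cyc2 O10).le, le_of_eq (det3_aba u0 p2).symm,
      le_of_eq (det3_abb u0 p2).symm, X11.le, (dpos_cyc2 O60).le, X12.le]
  have tab2 : ∀ y ∈ T, 0 ≤ det3 p2 u1 y := by
    intro y hy
    rcases hmemT y hy with rfl | rfl | rfl | rfl | rfl | rfl
    exacts [(dpos_cyc O31).le, X22.le, le_of_eq (det3_aba p2 u1).symm,
      le_of_eq (det3_abb p2 u1).symm, (dpos_cyc O11).le, X21.le]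
  have tab3 : ∀ y ∈ T, 0 ≤ det3 u1 p4 y := by
    intro y hy
    rcases hmemT y hy with rfl | rfl | rfl | rfl | rfl | rfl
    exacts [(dpos_cyc2 O61).le, X32.le, (dpos_cyc2 O11).le,
      le_of_eq (det3_aba u1 p4).symm, le_of_eq (det3_abb u1 p4).symm, X31.le]
  have tab4 : ∀ y ∈ T, 0 ≤ det3 p4 u2 y := by
    intro y hy
    rcases hmemT y hy with rfl | rfl | rfl | rfl | rfl | rfl
    exacts [(dpos_cyc O12).le, X41.le, (dpos_cyc O32).le, X42.le,
      le_of_eq (det3_aba p4 u2).symm, le_of_eq (det3_abb p4 u2).symm]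
  have tab5 : ∀ y ∈ T, 0 ≤ det3 u2 p0 y := by
    intro y hy
    rcases hmemT y hy with rfl | rfl | rfl | rfl | rfl | rfl
    exacts [le_of_eq (det3_abb u2 p0).symm, X51.le, (dpos_cyc2 O62).le, X52.le,
      (dpos_cyc2 O12).le, le_of_eq (det3_aba u2 p0).symm]
  -- extreme points
  have hext : ∀ x ∈ (T : Set (ℝ × ℝ)), x ∈ Set.extremePoints ℝ (convexHull ℝ (T : Set (ℝ × ℝ))) := by
    intro x hx
    rcases hmemT x (Finset.mem_coe.1 hx) with rfl | rfl | rfl | rfl | rfl | rfl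
    · refine extreme_helper T p0 u2 u0 hp0T tab5 tab0 ?_
      intro y hy h5 h0
      rcases hmemT y hy with rfl | rfl | rfl | rfl | rfl | rfl
      · rfl
      · exact absurd h5 (ne_of_gt X51)
      · exact absurd h0 (ne_of_gt (dpos_cyc O10))
      · exact absurd h0 (ne_of_gt X01)
      · exact absurd h0 (ne_of_gt (dpos_cyc O30))
      · exact absurd h0 (ne_of_gt X02)
    · refine extreme_helper T u0 p0 p2 hu0T tab0 tab1 ?_
      intro y hy h0 h1
      rcases hmemT y hy with rfl | rfl | rfl | rfl | rfl | rfl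
      · exact absurd h1 (ne_of_gt (dpos_cyc2 O10))
      · rfl
      · exact absurd h0 (ne_of_gt (dpos_cyc O10))
      · exact absurd h0 (ne_of_gt X01)
      · exact absurd h0 (ne_of_gt (dpos_cyc O30))
      · exact absurd h0 (ne_of_gt X02)
    · refine extreme_helper T p2 u0 u1 hp2T tab1 tab2 ?_
      intro y hy h1 h2
      rcases hmemT y hy with rfl | rfl | rfl | rfl | rfl | rfl
      · exact absurd h2 (ne_of_gt (dpos_cyc O31))
      · exact absurd h2 (ne_of_gt X22)
      · rfl
      · exact absurd h1 (ne_of_gt X11)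
      · exact absurd h1 (ne_of_gt (dpos_cyc2 O60))
      · exact absurd h1 (ne_of_gt X12)
    · refine extreme_helper T u1 p2 p4 hu1T tab2 tab3 ?_
      intro y hy h2 h3
      rcases hmemT y hy with rfl | rfl | rfl | rfl | rfl | rfl
      · exact absurd h3 (ne_of_gt (dpos_cyc2 O61))
      · exact absurd h3 (ne_of_gt X32)
      · exact absurd h3 (ne_of_gt (dpos_cyc2 O11))
      · rfl
      · exact absurd h2 (ne_of_gt (dpos_cyc O11))
      · exact absurd h2 (ne_of_gt X21)
    · refine extreme_helper T p4 u1 u2 hp4T tab3 tab4 ?_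
      intro y hy h3 h4
      rcases hmemT y hy with rfl | rfl | rfl | rfl | rfl | rfl
      · exact absurd h4 (ne_of_gt (dpos_cyc O12))
      · exact absurd h4 (ne_of_gt X41)
      · exact absurd h4 (ne_of_gt (dpos_cyc O32))
      · exact absurd h4 (ne_of_gt X42)
      · rfl
      · exact absurd h3 (ne_of_gt X31)
    · refine extreme_helper T u2 p4 p0 hu2T tab4 tab5 ?_
      intro y hy h4 h5
      rcases hmemT y hy with rfl | rfl | rfl | rfl | rfl | rfl
      · exact absurd h4 (ne_of_gt (dpos_cyc O12))
      · exact absurd h5 (ne_of_gt X51)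
      · exact absurd h5 (ne_of_gt (dpos_cyc2 O62))
      · exact absurd h5 (ne_of_gt X52)
      · exact absurd h5 (ne_of_gt (dpos_cyc2 O12))
      · rfl
  -- original hexagon edge tables
  have tabE0 : ∀ y ∈ T, 0 ≤ det3 p0 p1 y := by
    intro y hy
    rcases hmemT y hy with rfl | rfl | rfl | rfl | rfl | rfl
    exacts [le_of_eq (det3_aba p0 p1).symm, e0a, d012.le, e1e, d014.le, e2c]
  have tabE1 : ∀ y ∈ T, 0 ≤ det3 p1 p2 y := by
    intro y hy
    rcases hmemT y hy with rfl | rfl | rfl | rfl | rfl | rfl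
    exacts [(dpos_cyc d012).le, e0b, le_of_eq (det3_abb p1 p2).symm, e1f, d124.le, e2d]
  have tabE2 : ∀ y ∈ T, 0 ≤ det3 p2 p3 y := by
    intro y hy
    rcases hmemT y hy with rfl | rfl | rfl | rfl | rfl | rfl
    exacts [(dpos_cyc d023).le, e0c, le_of_eq (det3_aba p2 p3).symm, e1a, d234.le, e2e]
  have tabE3 : ∀ y ∈ T, 0 ≤ det3 p3 p4 y := by
    intro y hy
    rcases hmemT y hy with rfl | rfl | rfl | rfl | rfl | rfl
    exacts [(dpos_cyc d034).le, e0d, (dpos_cyc d234).le, e1b, le_of_eq (det3_abb p3 p4).symm, e2f]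
  have tabE4 : ∀ y ∈ T, 0 ≤ det3 p4 p5 y := by
    intro y hy
    rcases hmemT y hy with rfl | rfl | rfl | rfl | rfl | rfl
    exacts [(dpos_cyc d045).le, e0e, (dpos_cyc d245).le, e1c, le_of_eq (det3_aba p4 p5).symm, e2a]
  have tabE5 : ∀ y ∈ T, 0 ≤ det3 p5 p0 y := by
    intro y hy
    rcases hmemT y hy with rfl | rfl | rfl | rfl | rfl | rfl
    exacts [le_of_eq (det3_abb p5 p0).symm, e0f, (dpos_cyc2 d025).le, e1d, (dpos_cyc2 d045).le, e2b]
  -- chord tables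
  have tabC0 : ∀ y ∈ T, det3 p0 p2 u0 ≤ det3 p0 p2 y := by
    intro y hy
    rcases hmemT y hy with rfl | rfl | rfl | rfl | rfl | rfl
    exacts [by rw [det3_aba]; exact f0.le, le_refl _, by rw [det3_abb]; exact f0.le,
      f0.le.trans O31.le, f0.le.trans d024.le, f0.le.trans O62.le]
  have tabC1 : ∀ y ∈ T, det3 p2 p4 u1 ≤ det3 p2 p4 y := by
    intro y hy
    rcases hmemT y hy with rfl | rfl | rfl | rfl | rfl | rfl
    exacts [f1.le.trans (dpos_cyc d024).le, f1.le.trans O60.le,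
      by rw [det3_aba]; exact f1.le, le_refl _, by rw [det3_abb]; exact f1.le,
      f1.le.trans O32.le]
  have tabC2 : ∀ y ∈ T, det3 p4 p0 u2 ≤ det3 p4 p0 y := by
    intro y hy
    rcases hmemT y hy with rfl | rfl | rfl | rfl | rfl | rfl
    exacts [by rw [det3_abb]; exact f2.le, f2.le.trans O30.le,
      f2.le.trans (dpos_cyc2 d024).le, f2.le.trans O61.le,
      by rw [det3_aba]; exact f2.le, le_refl _]
  -- the hole property
  have hhole : ∀ q ∈ S, q ∈ convexHull ℝ (T : Set (ℝ × ℝ)) → q ∈ (T : Set (ℝ × ℝ)) := by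
    intro q hqS hqHull
    by_cases hqT : q ∈ T
    · exact Finset.mem_coe.2 hqT
    exfalso
    have hqne := hqT
    rw [hT] at hqne
    simp only [Finset.mem_insert, Finset.mem_singleton] at hqne
    push_neg at hqne
    obtain ⟨m0, m1, m2, m3, m4, m5⟩ := hqne
    have hH0 : 0 ≤ det3 p0 u0 q := hull_halfplane p0 u0 0 tab0 hqHull
    have hH2 : 0 ≤ det3 p2 u1 q := hull_halfplane p2 u1 0 tab2 hqHull
    have hH4 : 0 ≤ det3 p4 u2 q := hull_halfplane p4 u2 0 tab4 hqHull
    -- q cannot be an odd vertex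
    have hq1 : q ≠ p1 := by
      intro hq
      rcases alt0 with h | h
      · exact m1 (hq.trans h.symm)
      · have : det3 p0 u0 p1 < 0 := by rw [det3_swap23]; linarith
        rw [hq] at hH0; linarith
    have hq3 : q ≠ p3 := by
      intro hq
      rcases alt1 with h | h
      · exact m3 (hq.trans h.symm)
      · have : det3 p2 u1 p3 < 0 := by rw [det3_swap23]; linarith
        rw [hq] at hH2; linarith
    have hq5 : q ≠ p5 := by
      intro hq
      rcases alt2 with h | h
      · exact m5 (hq.trans h.symm)
      · have : det3 p4 u2 p5 < 0 := by rw [det3_swap23]; linarith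
        rw [hq] at hH4; linarith
    -- strict containment in the original hexagon halfplanes
    have hE0 := hull_halfplane p0 p1 0 tabE0 hqHull
    have hE1 := hull_halfplane p1 p2 0 tabE1 hqHull
    have hE2 := hull_halfplane p2 p3 0 tabE2 hqHull
    have hE3 := hull_halfplane p3 p4 0 tabE3 hqHull
    have hE4 := hull_halfplane p4 p5 0 tabE4 hqHull
    have hE5 := hull_halfplane p5 p0 0 tabE5 hqHull
    have sE0 : 0 < det3 p0 p1 q := lt_of_le_of_ne hE0 (fun h =>
      hgp p0 hm0 p1 hm1 q hqS (ne12_of_pos d012) (Ne.symm m0) (Ne.symm hq1)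
        (collinear_of_det3 h.symm))
    have sE1 : 0 < det3 p1 p2 q := lt_of_le_of_ne hE1 (fun h =>
      hgp p1 hm1 p2 hm2 q hqS (ne12_of_pos d123) (Ne.symm hq1) (Ne.symm m2)
        (collinear_of_det3 h.symm))
    have sE2 : 0 < det3 p2 p3 q := lt_of_le_of_ne hE2 (fun h =>
      hgp p2 hm2 p3 hm3 q hqS (ne12_of_pos d234) (Ne.symm m2) (Ne.symm hq3)
        (collinear_of_det3 h.symm))
    have sE3 : 0 < det3 p3 p4 q := lt_of_le_of_ne hE3 (fun h =>
      hgp p3 hm3 p4 hm4 q hqS (ne12_of_pos d345) (Ne.symm hq3) (Ne.symm m4)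
        (collinear_of_det3 h.symm))
    have sE4 : 0 < det3 p4 p5 q := lt_of_le_of_ne hE4 (fun h =>
      hgp p4 hm4 p5 hm5 q hqS (ne12_of_pos (dpos_cyc d045)) (Ne.symm m4) (Ne.symm hq5)
        (collinear_of_det3 h.symm))
    have sE5 : 0 < det3 p5 p0 q := lt_of_le_of_ne hE5 (fun h =>
      hgp p5 hm5 p0 hm0 q hqS (ne12_of_pos (dpos_cyc2 d015)) (Ne.symm hq5) (Ne.symm m0)
        (collinear_of_det3 h.symm))
    -- chord analysis
    have hcorner : ∀ (a b : ℝ × ℝ) (u : ℝ × ℝ), u ∈ T →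
        (∀ y ∈ T, det3 a b u ≤ det3 a b y) →
        (∀ y ∈ T, det3 a b y = det3 a b u → y = u) →
        det3 a b q ≤ det3 a b u → q = u := by
      intro a b u huT htab huniq hle
      have hface := face_lemma T a b (det3 a b u) htab hqHull hle
      have hsub : (((T.filter fun y => det3 a b y = det3 a b u) : Finset (ℝ × ℝ)) :
          Set (ℝ × ℝ)) ⊆ {u} := by
        intro y hy
        rw [Finset.mem_coe, Finset.mem_filter] at hy
        exact huniq y hy.1 hy.2
      have := convexHull_mono hsub hface
      rwa [convexHull_singleton, Set.mem_singleton_iff] at this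
    rcases lt_trichotomy (det3 p0 p2 q) 0 with hc0 | hc0 | hc0
    · have hle := max0 q hqS ⟨sE0, sE1, sE2, sE3, sE4, sE5⟩ hc0
      have huniq : ∀ y ∈ T, det3 p0 p2 y = det3 p0 p2 u0 → y = u0 := by
        intro y hy h
        rcases hmemT y hy with rfl | rfl | rfl | rfl | rfl | rfl
        · exfalso; rw [det3_aba] at h; linarith
        · rfl
        · exfalso; rw [det3_abb] at h; linarith
        · exfalso; linarith [O31]
        · exfalso; linarith [d024]
        · exfalso; linarith [O62]
      exact m1 (hcorner p0 p2 u0 hu0T tabC0 huniq hle)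
    · exact hgp p0 hm0 p2 hm2 q hqS n02 (Ne.symm m0) (Ne.symm m2) (collinear_of_det3 hc0)
    · rcases lt_trichotomy (det3 p2 p4 q) 0 with hc1 | hc1 | hc1
      · have hle := max1 q hqS ⟨sE2, sE3, sE4, sE5, sE0, sE1⟩ hc1
        have huniq : ∀ y ∈ T, det3 p2 p4 y = det3 p2 p4 u1 → y = u1 := by
          intro y hy h
          rcases hmemT y hy with rfl | rfl | rfl | rfl | rfl | rfl
          · exfalso; linarith [dpos_cyc d024]
          · exfalso; linarith [O60]
          · exfalso; rw [det3_aba] at h; linarith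
          · rfl
          · exfalso; rw [det3_abb] at h; linarith
          · exfalso; linarith [O32]
        exact m3 (hcorner p2 p4 u1 hu1T tabC1 huniq hle)
      · exact hgp p2 hm2 p4 hm4 q hqS n24 (Ne.symm m2) (Ne.symm m4) (collinear_of_det3 hc1)
      · rcases lt_trichotomy (det3 p4 p0 q) 0 with hc2 | hc2 | hc2
        · have hle := max2 q hqS ⟨sE4, sE5, sE0, sE1, sE2, sE3⟩ hc2
          have huniq : ∀ y ∈ T, det3 p4 p0 y = det3 p4 p0 u2 → y = u2 := by
            intro y hy h
            rcases hmemT y hy with rfl | rfl | rfl | rfl | rfl | rfl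
            · exfalso; rw [det3_abb] at h; linarith
            · exfalso; linarith [O30]
            · exfalso; linarith [dpos_cyc2 d024]
            · exfalso; linarith [O61]
            · exfalso; rw [det3_aba] at h; linarith
            · rfl
          exact m5 (hcorner p4 p0 u2 hu2T tabC2 huniq hle)
        · exact hgp p4 hm4 p0 hm0 q hqS (Ne.symm n04) (Ne.symm m4) (Ne.symm m0)
            (collinear_of_det3 hc2)
        · exact hempty q hqS (mem_interior_triangle p0 p2 p4 q d024 hc0 hc1 hc2)
  -- assemble
  refine ⟨(T : Set (ℝ × ℝ)), ⟨⟨?_, T.finite_toSet, ?_, hext⟩, hhole⟩⟩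
  · intro y hy
    rcases hmemT y (Finset.mem_coe.1 hy) with rfl | rfl | rfl | rfl | rfl | rfl
    exacts [hm0, hu0S, hm2, hu1S, hm4, hu2S]
  · rw [Set.ncard_coe_finset, hcard]

/-- If `v 0, …, v 5` are six points of `S` forming a convex hexagon, listed in
the cyclic order in which they appear on the boundary of their convex hull
(equivalently, for every directed edge of the hexagon all remaining four points
lie strictly on one and the same side), and no point of `S` lies in the interior
of the triangle on the 1st, 3rd and 5th vertices, then `S` contains a 6-hole. -/
theorem hexagon_with_empty_odd_triangle_gives_6hole (S : Set (ℝ × ℝ))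
    (hfin : S.Finite) (hgp : InGenPos S)
    (v : Fin 6 → ℝ × ℝ) (hmem : ∀ i, v i ∈ S) (hinj : Function.Injective v)
    (hconv :
      (∀ i j : Fin 6, j ≠ i → j ≠ i + 1 → det3 (v i) (v (i + 1)) (v j) > 0) ∨
      (∀ i j : Fin 6, j ≠ i → j ≠ i + 1 → det3 (v i) (v (i + 1)) (v j) < 0))
    (hempty : ∀ q ∈ S,
      q ∉ interior (convexHull ℝ ({v 0, v 2, v 4} : Set (ℝ × ℝ)))) :
    ∃ P : Set (ℝ × ℝ), IsHole 6 S P := by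
  rcases hconv with hv | hv
  · have d012 : 0 < det3 (v 0) (v 1) (v 2) := hv 0 2 (by decide) (by decide)
    have d013 : 0 < det3 (v 0) (v 1) (v 3) := hv 0 3 (by decide) (by decide)
    have d014 : 0 < det3 (v 0) (v 1) (v 4) := hv 0 4 (by decide) (by decide)
    have d015 : 0 < det3 (v 0) (v 1) (v 5) := hv 0 5 (by decide) (by decide)
    have d023 : 0 < det3 (v 0) (v 2) (v 3) := dpos_cyc2 (hv 2 0 (by decide) (by decide))
    have d025 : 0 < det3 (v 0) (v 2) (v 5) := dpos_cyc (hv 5 2 (by decide) (by decide))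
    have d034 : 0 < det3 (v 0) (v 3) (v 4) := dpos_cyc2 (hv 3 0 (by decide) (by decide))
    have d035 : 0 < det3 (v 0) (v 3) (v 5) := dpos_cyc (hv 5 3 (by decide) (by decide))
    have d045 : 0 < det3 (v 0) (v 4) (v 5) := dpos_cyc2 (hv 4 0 (by decide) (by decide))
    have d123 : 0 < det3 (v 1) (v 2) (v 3) := hv 1 3 (by decide) (by decide)
    have d124 : 0 < det3 (v 1) (v 2) (v 4) := hv 1 4 (by decide) (by decide)
    have d125 : 0 < det3 (v 1) (v 2) (v 5) := hv 1 5 (by decide) (by decide)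
    have d134 : 0 < det3 (v 1) (v 3) (v 4) := dpos_cyc2 (hv 3 1 (by decide) (by decide))
    have d145 : 0 < det3 (v 1) (v 4) (v 5) := dpos_cyc2 (hv 4 1 (by decide) (by decide))
    have d234 : 0 < det3 (v 2) (v 3) (v 4) := hv 2 4 (by decide) (by decide)
    have d235 : 0 < det3 (v 2) (v 3) (v 5) := hv 2 5 (by decide) (by decide)
    have d245 : 0 < det3 (v 2) (v 4) (v 5) := dpos_cyc2 (hv 4 2 (by decide) (by decide))
    have d345 : 0 < det3 (v 3) (v 4) (v 5) := hv 3 5 (by decide) (by decide)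
    exact main_ccw S hfin hgp (v 0) (v 1) (v 2) (v 3) (v 4) (v 5)
      (hmem 0) (hmem 1) (hmem 2) (hmem 3) (hmem 4) (hmem 5)
      d012 d013 d014 d015 d023 d025 d034 d035 d045 d123 d124 d125 d134 d145 d234 d235 d245 d345
      hempty
  · have D012 : 0 < det3 (v 0) (v 5) (v 4) := dpos_of_neg_swap13 (hv 4 0 (by decide) (by decide))
    have D013 : 0 < det3 (v 0) (v 5) (v 3) := dpos_of_neg_swap12 (hv 5 3 (by decide) (by decide))
    have D014 : 0 < det3 (v 0) (v 5) (v 2) := dpos_of_neg_swap12 (hv 5 2 (by decide) (by decide))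
    have D015 : 0 < det3 (v 0) (v 5) (v 1) := dpos_of_neg_swap12 (hv 5 1 (by decide) (by decide))
    have D023 : 0 < det3 (v 0) (v 4) (v 3) := dpos_of_neg_swap13 (hv 3 0 (by decide) (by decide))
    have D025 : 0 < det3 (v 0) (v 4) (v 1) := dpos_of_neg_swap23 (hv 0 4 (by decide) (by decide))
    have D034 : 0 < det3 (v 0) (v 3) (v 2) :=
      dpos_of_neg_swap23 (dneg_cyc2 (hv 2 0 (by decide) (by decide)))
    have D035 : 0 < det3 (v 0) (v 3) (v 1) := dpos_of_neg_swap23 (hv 0 3 (by decide) (by decide))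
    have D045 : 0 < det3 (v 0) (v 2) (v 1) := dpos_of_neg_swap23 (hv 0 2 (by decide) (by decide))
    have D123 : 0 < det3 (v 5) (v 4) (v 3) := dpos_of_neg_swap12 (hv 4 3 (by decide) (by decide))
    have D124 : 0 < det3 (v 5) (v 4) (v 2) := dpos_of_neg_swap12 (hv 4 2 (by decide) (by decide))
    have D125 : 0 < det3 (v 5) (v 4) (v 1) := dpos_of_neg_swap12 (hv 4 1 (by decide) (by decide))
    have D134 : 0 < det3 (v 5) (v 3) (v 2) := dpos_of_neg_swap13 (hv 2 5 (by decide) (by decide))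
    have D145 : 0 < det3 (v 5) (v 2) (v 1) := dpos_of_neg_swap13 (hv 1 5 (by decide) (by decide))
    have D234 : 0 < det3 (v 4) (v 3) (v 2) := dpos_of_neg_swap12 (hv 3 2 (by decide) (by decide))
    have D235 : 0 < det3 (v 4) (v 3) (v 1) := dpos_of_neg_swap12 (hv 3 1 (by decide) (by decide))
    have D245 : 0 < det3 (v 4) (v 2) (v 1) := dpos_of_neg_swap13 (hv 1 4 (by decide) (by decide))
    have D345 : 0 < det3 (v 3) (v 2) (v 1) := dpos_of_neg_swap13 (hv 1 3 (by decide) (by decide))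
    have hempty' : ∀ q ∈ S,
        q ∉ interior (convexHull ℝ ({v 0, v 4, v 2} : Set (ℝ × ℝ))) := by
      intro q hq
      have he : ({v 0, v 4, v 2} : Set (ℝ × ℝ)) = {v 0, v 2, v 4} := by
        rw [Set.pair_comm (v 4) (v 2)]
      rw [he]
      exact hempty q hq
    exact main_ccw S hfin hgp (v 0) (v 5) (v 4) (v 3) (v 2) (v 1)
      (hmem 0) (hmem 5) (hmem 4) (hmem 3) (hmem 2) (hmem 1)
      D012 D013 D014 D015 D023 D025 D034 D035 D045 D123 D124 D125 D134 D145 D234 D235 D245 D345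
      hempty'
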